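/- Let g ≥ 2 and let A be a 2g × 2g integer matrix lying in the symplectic group Sp(2g, ℤ), i.e., Aᵀ J A = J where J is the standard symplectic form. If β is a Pisot number and β is an eigenvalue of A regarded as a real matrix (equivalently, β is a root of the characteristic polynomial of A), then the degree of β over ℚ is at most g. -/

import Mathlib

open Matrix Polynomial

/-- A Pisot number: a real algebraic integer `β > 1` all of whose Galois conjugates
(the other complex roots of its minimal polynomial over `ℚ`) have modulus `< 1`. -/
def IsPisot (β : ℝ) : Prop :=
  1 < β ∧ IsIntegral ℤ β ∧
    ∀ z : ℂ, z ≠ (β : ℂ) → Polynomial.aeval z (minpoly ℚ β) = 0 → ‖z‖ < 1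

/-- Evaluation of the characteristic polynomial as a determinant. -/
lemma eval_charpoly_det {n : Type*} [DecidableEq n] [Fintype n] {R : Type*} [CommRing R]
    (M : Matrix n n R) (x : R) :
    M.charpoly.eval x = (x • (1 : Matrix n n R) - M).det := by
  rw [Matrix.charpoly, ← Polynomial.coe_evalRingHom, RingHom.map_det]
  congr 1
  ext i j
  rcases eq_or_ne i j with rfl | h
  · simp [charmatrix_apply_eq, Matrix.one_apply]
  · simp [charmatrix_apply_ne _ _ _ h, Matrix.one_apply, h]

/-- A Pisot number whose inverse is a conjugate has degree at most 2. -/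
lemma pisot_inv_conj_degree_le_two (β : ℝ) (h1 : 1 < β) (hint : IsIntegral ℚ β)
    (hconj : ∀ z : ℂ, z ≠ (β : ℂ) → Polynomial.aeval z (minpoly ℚ β) = 0 → ‖z‖ < 1)
    (hc : Polynomial.aeval β⁻¹ (minpoly ℚ β) = 0) :
    (minpoly ℚ β).natDegree ≤ 2 := by
  set p := minpoly ℚ β with hpdef
  have hβ0 : β ≠ 0 := by positivity
  have hpne : p ≠ 0 := minpoly.ne_zero hint
  have hc0 : p.coeff 0 ≠ 0 := minpoly.coeff_zero_ne_zero hint hβ0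
  -- β is a root of the reverse of p
  have hrev : Polynomial.aeval β p.reverse = 0 := by
    haveI : Invertible (β⁻¹ : ℝ) := invertibleOfNonzero (inv_ne_zero hβ0)
    have := (Polynomial.eval₂_reverse_eq_zero_iff (algebraMap ℚ ℝ) (β⁻¹) p).mpr
      (by rwa [Polynomial.aeval_def] at hc)
    rwa [invOf_eq_inv, inv_inv, ← Polynomial.aeval_def] at this
  obtain ⟨u, hu⟩ := minpoly.dvd ℚ β hrev
  have hrevne : p.reverse ≠ 0 := fun h => hpne (Polynomial.reverse_eq_zero.mp h)
  have hune : u ≠ 0 := by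
    rintro rfl
    rw [mul_zero] at hu
    exact hrevne hu
  have hudeg : u.natDegree = 0 := by
    have hdr : p.reverse.natDegree = p.natDegree := by
      rw [Polynomial.reverse_natDegree, Polynomial.natTrailingDegree_eq_zero.mpr (Or.inr hc0)]
      omega
    have := congrArg Polynomial.natDegree hu
    rw [hdr, Polynomial.natDegree_mul hpne hune] at this
    omega
  have huC : u = Polynomial.C (u.coeff 0) := Polynomial.eq_C_of_natDegree_eq_zero hudeg
  have huc0 : u.coeff 0 ≠ 0 := fun h => hune (by rw [huC, h, map_zero])
  -- complex roots of p are closed under inversion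
  have hinv : ∀ z : ℂ, Polynomial.aeval z p = 0 → Polynomial.aeval z⁻¹ p = 0 := by
    intro z hz
    have hz0 : z ≠ 0 := by
      rintro rfl
      rw [Polynomial.aeval_def, Polynomial.eval₂_at_zero] at hz
      exact hc0 ((_root_.map_eq_zero (algebraMap ℚ ℂ)).mp hz)
    haveI : Invertible z := invertibleOfNonzero hz0
    have h2 : Polynomial.aeval z⁻¹ p.reverse = 0 := by
      have := (Polynomial.eval₂_reverse_eq_zero_iff (algebraMap ℚ ℂ) z p).mpr
        (by rwa [Polynomial.aeval_def] at hz)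
      rwa [invOf_eq_inv, ← Polynomial.aeval_def] at this
    rw [hu, ← hpdef, _root_.map_mul] at h2
    have : Polynomial.aeval z⁻¹ u ≠ 0 := by
      rw [huC, Polynomial.aeval_C]
      exact fun h => huc0 ((_root_.map_eq_zero (algebraMap ℚ ℂ)).mp h)
    exact (mul_eq_zero.mp h2).resolve_right this
  -- all complex roots of p lie in {β, β⁻¹}
  set P : Polynomial ℂ := p.map (algebraMap ℚ ℂ) with hPdef
  have hPne : P ≠ 0 := Polynomial.map_ne_zero hpne
  have hroots : ∀ z ∈ P.roots, z = (β : ℂ) ∨ z = (β : ℂ)⁻¹ := by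
    intro z hzmem
    have hz : Polynomial.aeval z p = 0 := by
      have h2 : P.eval z = 0 := (Polynomial.mem_roots hPne).mp hzmem
      rwa [hPdef, Polynomial.eval_map, ← Polynomial.aeval_def] at h2
    by_contra hcon
    push_neg at hcon
    obtain ⟨hz1, hz2⟩ := hcon
    have hz0 : z ≠ 0 := by
      rintro rfl
      rw [Polynomial.aeval_def, Polynomial.eval₂_at_zero] at hz
      exact hc0 ((_root_.map_eq_zero (algebraMap ℚ ℂ)).mp hz)
    have habs1 : ‖z‖ < 1 := hconj z hz1 hz
    have hzinv : Polynomial.aeval z⁻¹ p = 0 := hinv z hz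
    have hz3 : z⁻¹ ≠ (β : ℂ) := by
      intro h
      apply hz2
      rw [← inv_inv z, h]
    have habs2 : ‖z⁻¹‖ < 1 := hconj z⁻¹ hz3 hzinv
    have : ‖z‖ * ‖z⁻¹‖ = 1 := by
      rw [← norm_mul, mul_inv_cancel₀ hz0, norm_one]
    nlinarith [norm_nonneg z, norm_nonneg z⁻¹]
  -- conclude by counting roots
  have hsep : P.Separable := ((minpoly.irreducible hint).separable).map
  have hnodup : P.roots.Nodup := Polynomial.nodup_roots hsep
  have hcard : Multiset.card P.roots = p.natDegree := by
    rw [Polynomial.splits_iff_card_roots.mp (IsAlgClosed.splits P)]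
    exact Polynomial.natDegree_map_eq_of_injective (algebraMap ℚ ℂ).injective p
  have hsub : P.roots.toFinset ⊆ ({(β : ℂ), (β : ℂ)⁻¹} : Finset ℂ) := by
    intro z hz
    rw [Multiset.mem_toFinset] at hz
    rcases hroots z hz with h | h <;> simp [h]
  calc p.natDegree = Multiset.card P.roots := hcard.symm
    _ = P.roots.toFinset.card := (Multiset.toFinset_card_of_nodup hnodup).symm
    _ ≤ ({(β : ℂ), (β : ℂ)⁻¹} : Finset ℂ).card := Finset.card_le_card hsub
    _ ≤ 2 := Finset.card_insert_le _ _ |>.trans (by simp)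

theorem stmt_8 (g : ℕ) (hg : 2 ≤ g)
    (A : Matrix (Fin g ⊕ Fin g) (Fin g ⊕ Fin g) ℤ)
    (hA : Aᵀ * Matrix.fromBlocks (0 : Matrix (Fin g) (Fin g) ℤ) (-1) 1 0 * A =
      Matrix.fromBlocks (0 : Matrix (Fin g) (Fin g) ℤ) (-1) 1 0)
    (β : ℝ) (hβ : IsPisot β)
    (hroot : ((A.map (Int.cast : ℤ → ℝ)).charpoly).eval β = 0) :
    (minpoly ℚ β).natDegree ≤ g := by
  obtain ⟨hβ1, hβintZ, hβconj⟩ := hβ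
  have hβ0 : β ≠ 0 := (lt_trans zero_lt_one hβ1).ne'
  set B : Matrix (Fin g ⊕ Fin g) (Fin g ⊕ Fin g) ℝ := A.map (Int.cast : ℤ → ℝ) with hB
  set J : Matrix (Fin g ⊕ Fin g) (Fin g ⊕ Fin g) ℝ :=
    Matrix.fromBlocks (0 : Matrix (Fin g) (Fin g) ℝ) (-1) 1 0 with hJ
  have hmapmul : ∀ X Y : Matrix (Fin g ⊕ Fin g) (Fin g ⊕ Fin g) ℤ,
      (X * Y).map (Int.cast : ℤ → ℝ) = X.map Int.cast * Y.map Int.cast := fun X Y =>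
    Matrix.map_mul (f := Int.castRingHom ℝ)
  have hJmap : (Matrix.fromBlocks (0 : Matrix (Fin g) (Fin g) ℤ) (-1) 1 0).map
      (Int.cast : ℤ → ℝ) = J := by
    rw [Matrix.fromBlocks_map, hJ]
    ext i j
    rcases i with i | i <;> rcases j with j | j <;>
      simp [Matrix.fromBlocks_apply₁₁, Matrix.fromBlocks_apply₁₂, Matrix.fromBlocks_apply₂₁,
        Matrix.fromBlocks_apply₂₂, Matrix.map_apply, Matrix.one_apply, Matrix.neg_apply,
        apply_ite (Int.cast : ℤ → ℝ)]
  have hBJ : Bᵀ * J * B = J := by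
    have h := congrArg (fun M : Matrix (Fin g ⊕ Fin g) (Fin g ⊕ Fin g) ℤ =>
      M.map (Int.cast : ℤ → ℝ)) hA
    simp only [hmapmul, hJmap, Matrix.transpose_map, ← hB] at h
    exact h
  have hJJ : J * J = -1 := by
    rw [hJ, Matrix.fromBlocks_multiply]
    ext i j
    rcases i with i | i <;> rcases j with j | j <;>
      simp [Matrix.fromBlocks_apply₁₁, Matrix.fromBlocks_apply₁₂, Matrix.fromBlocks_apply₂₁,
        Matrix.fromBlocks_apply₂₂, Matrix.one_apply, Matrix.neg_apply]
  have hdetJ : J.det ≠ 0 := by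
    intro h0
    have h := congrArg Matrix.det hJJ
    rw [Matrix.det_mul, h0, mul_zero, Matrix.det_neg, Matrix.det_one, mul_one] at h
    exact pow_ne_zero _ (by norm_num : (-1 : ℝ) ≠ 0) h.symm
  have hdetB : B.det ≠ 0 := by
    have h := congrArg Matrix.det hBJ
    rw [Matrix.det_mul, Matrix.det_mul, Matrix.det_transpose] at h
    intro h0
    rw [h0, zero_mul, zero_mul] at h
    exact hdetJ h.symm
  have hroot' : ((β : ℝ) • (1 : Matrix (Fin g ⊕ Fin g) (Fin g ⊕ Fin g) ℝ) - B).det = 0 := by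
    rw [← eval_charpoly_det]; exact hroot
  have hkey : (β⁻¹ • (1 : Matrix (Fin g ⊕ Fin g) (Fin g ⊕ Fin g) ℝ) - Bᵀ) * (J * B) =
      (-β⁻¹) • (J * (β • (1 : Matrix (Fin g ⊕ Fin g) (Fin g ⊕ Fin g) ℝ) - B)) := by
    have h1 : Bᵀ * (J * B) = J := by rw [← Matrix.mul_assoc]; exact hBJ
    rw [sub_mul, smul_mul_assoc, one_mul, h1, Matrix.mul_sub, Matrix.mul_smul, Matrix.mul_one]
    match_scalars <;> field_simp
  have hL := congrArg Matrix.det hkey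
  rw [Matrix.det_mul, Matrix.det_mul, Matrix.det_smul, Matrix.det_mul, hroot', mul_zero,
    mul_zero] at hL
  have hdetM : (β⁻¹ • (1 : Matrix (Fin g ⊕ Fin g) (Fin g ⊕ Fin g) ℝ) - Bᵀ).det = 0 := by
    rcases mul_eq_zero.mp hL with h | h
    · exact h
    · exact absurd h (mul_ne_zero hdetJ hdetB)
  have hrootinv : B.charpoly.eval β⁻¹ = 0 := by
    rw [eval_charpoly_det, ← Matrix.det_transpose, Matrix.transpose_sub, Matrix.transpose_smul,
      Matrix.transpose_one]
    exact hdetM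
  -- move to ℚ
  set pQ : Polynomial ℚ := A.charpoly.map (Int.castRingHom ℚ) with hpQ
  have hBcp : B.charpoly = pQ.map (algebraMap ℚ ℝ) := by
    have h1 : B.charpoly = A.charpoly.map (Int.castRingHom ℝ) :=
      Matrix.charpoly_map A (Int.castRingHom ℝ)
    rw [h1, hpQ, Polynomial.map_map]
    congr 1
  have haQ : Polynomial.aeval β pQ = 0 := by
    rw [Polynomial.aeval_def, ← Polynomial.eval_map, ← hBcp]; exact hroot
  have haQi : Polynomial.aeval β⁻¹ pQ = 0 := by
    rw [Polynomial.aeval_def, ← Polynomial.eval_map, ← hBcp]; exact hrootinv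
  have hpQmonic : pQ.Monic := (Matrix.charpoly_monic A).map _
  have hpQdeg : pQ.natDegree = 2 * g := by
    rw [hpQ, (Matrix.charpoly_monic A).natDegree_map, Matrix.charpoly_natDegree_eq_dim,
      Fintype.card_sum, Fintype.card_fin]
    omega
  have hintQ : IsIntegral ℚ β := ⟨pQ, hpQmonic, by rwa [Polynomial.aeval_def] at haQ⟩
  have hintQi : IsIntegral ℚ β⁻¹ := ⟨pQ, hpQmonic, by rwa [Polynomial.aeval_def] at haQi⟩
  have hdvd : minpoly ℚ β ∣ pQ := minpoly.dvd ℚ β haQ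
  have hdvdi : minpoly ℚ β⁻¹ ∣ pQ := minpoly.dvd ℚ β⁻¹ haQi
  have hadj : IntermediateField.adjoin ℚ {β} = IntermediateField.adjoin ℚ {β⁻¹} := by
    apply le_antisymm
    · rw [IntermediateField.adjoin_le_iff, Set.singleton_subset_iff]
      have h := (IntermediateField.adjoin ℚ ({β⁻¹} : Set ℝ)).inv_mem
        (IntermediateField.mem_adjoin_simple_self ℚ β⁻¹)
      rwa [inv_inv] at h
    · rw [IntermediateField.adjoin_le_iff, Set.singleton_subset_iff]
      exact (IntermediateField.adjoin ℚ ({β} : Set ℝ)).inv_mem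
        (IntermediateField.mem_adjoin_simple_self ℚ β)
  have hdegeq : (minpoly ℚ β⁻¹).natDegree = (minpoly ℚ β).natDegree := by
    rw [← IntermediateField.adjoin.finrank hintQi, ← IntermediateField.adjoin.finrank hintQ,
      ← hadj]
  by_cases hc : Polynomial.aeval β⁻¹ (minpoly ℚ β) = 0
  · exact le_trans (pisot_inv_conj_degree_le_two β hβ1 hintQ hβconj hc) hg
  · have hirr := minpoly.irreducible hintQ
    have hirri := minpoly.irreducible hintQi
    have hne : minpoly ℚ β ≠ minpoly ℚ β⁻¹ := by
      intro h
      apply hc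
      rw [h]
      exact minpoly.aeval ℚ β⁻¹
    have hnd : ¬minpoly ℚ β ∣ minpoly ℚ β⁻¹ := fun h =>
      hne (Polynomial.eq_of_monic_of_associated (minpoly.monic hintQ) (minpoly.monic hintQi)
        (hirr.associated_of_dvd hirri h))
    have hcop : IsCoprime (minpoly ℚ β) (minpoly ℚ β⁻¹) := by
      apply isCoprime_of_irreducible_dvd
      · rintro ⟨h, -⟩
        exact minpoly.ne_zero hintQ h
      · intro z hz hz1 hz2
        exact hnd (((hz.associated_of_dvd hirr hz1).symm.dvd).trans hz2)
    have hmul : minpoly ℚ β * minpoly ℚ β⁻¹ ∣ pQ := hcop.mul_dvd hdvd hdvdi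
    have hle := Polynomial.natDegree_le_of_dvd hmul hpQmonic.ne_zero
    rw [Polynomial.natDegree_mul (minpoly.ne_zero hintQ) (minpoly.ne_zero hintQi), hdegeq,
      hpQdeg] at hle
    omega
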